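/- There exists a constant C ≥ 1 such that the following holds for every real ε ∈ (0, 1/2] and every simple graph G on a finite vertex set V with |V| = n ≥ 2: if there is an assignment of a unit vector u_i in a real inner product space to each vertex i ∈ V such that ⟨u_i, u_j⟩ ≤ −1 + ε for every edge {i,j} of G, then G contains an independent set of size at least n^{1−Cε}/C. -/

import Mathlib

open Finset
open MeasureTheory ProbabilityTheory Real
open scoped ENNReal NNReal

lemma gpdf_mul_exp (b x : ℝ) :
    gaussianPDFReal 0 1 x * Real.exp (b * x) = Real.exp (b^2/2) * gaussianPDFReal b 1 x := by
  simp only [gaussianPDFReal, NNReal.coe_one, mul_one, sub_zero]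
  rw [mul_assoc, ← Real.exp_add, mul_comm (Real.exp _), mul_assoc, ← Real.exp_add]
  ring_nf

lemma gaussian_eq_withDensity :
    gaussianReal 0 1 = (volume : Measure ℝ).withDensity
      (fun x => ((gaussianPDFReal 0 1 x).toNNReal : ENNReal)) := by
  rw [gaussianReal_of_var_ne_zero 0 one_ne_zero, gaussianPDF_def]
  rfl

lemma integrable_exp_mul_gaussian (b : ℝ) :
    Integrable (fun x => Real.exp (b * x)) (gaussianReal 0 1) := by
  rw [gaussian_eq_withDensity, integrable_withDensity_iff_integrable_smul
    (measurable_gaussianPDFReal 0 1).real_toNNReal]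
  refine (Integrable.congr ((integrable_gaussianPDFReal b 1).const_mul (Real.exp (b^2/2))) ?_)
  filter_upwards with x
  rw [NNReal.smul_def, smul_eq_mul, Real.coe_toNNReal _ (gaussianPDFReal_nonneg 0 1 x),
    ← gpdf_mul_exp]

lemma integral_exp_mul_gaussian (b : ℝ) :
    ∫ x, Real.exp (b * x) ∂(gaussianReal 0 1) = Real.exp (b^2/2) := by
  rw [gaussian_eq_withDensity,
    integral_withDensity_eq_integral_smul (measurable_gaussianPDFReal 0 1).real_toNNReal]
  have : ∀ x : ℝ, (gaussianPDFReal 0 1 x).toNNReal • Real.exp (b * x)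
      = Real.exp (b^2/2) * gaussianPDFReal b 1 x := by
    intro x
    rw [NNReal.smul_def, smul_eq_mul, Real.coe_toNNReal _ (gaussianPDFReal_nonneg 0 1 x),
      ← gpdf_mul_exp]
  simp_rw [this]
  rw [integral_const_mul, integral_gaussianPDFReal_eq_one b one_ne_zero, mul_one]

section PiGaussian

noncomputable local instance gSpace : MeasureSpace ℝ := ⟨gaussianReal 0 1⟩

lemma volume_real_eq : (volume : Measure ℝ) = gaussianReal 0 1 := rfl

noncomputable instance : IsProbabilityMeasure (volume : Measure ℝ) := by
  rw [volume_real_eq]; infer_instance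

lemma pi_gaussian_eq_volume {m : ℕ} :
    (Measure.pi fun _ : Fin m => gaussianReal 0 1) = (volume : Measure (Fin m → ℝ)) := by
  rw [volume_pi]; rfl

lemma integrable_exp_sum_mul {m : ℕ} (c : Fin m → ℝ) :
    Integrable (fun ω : Fin m → ℝ => Real.exp (∑ k, c k * ω k))
      (Measure.pi fun _ : Fin m => gaussianReal 0 1) := by
  rw [pi_gaussian_eq_volume]
  have : (fun ω : Fin m → ℝ => Real.exp (∑ k, c k * ω k))
      = fun ω : Fin m → ℝ => ∏ k, Real.exp (c k * ω k) := by
    ext ω; rw [← Real.exp_sum]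
  rw [this]
  exact Integrable.fintype_prod (f := fun k x => Real.exp (c k * x))
    (fun k => integrable_exp_mul_gaussian (c k))

lemma integral_exp_sum_mul {m : ℕ} (c : Fin m → ℝ) :
    ∫ ω, Real.exp (∑ k, c k * ω k) ∂(Measure.pi fun _ : Fin m => gaussianReal 0 1)
      = Real.exp ((∑ k, (c k)^2) / 2) := by
  rw [pi_gaussian_eq_volume]
  have : (fun ω : Fin m → ℝ => Real.exp (∑ k, c k * ω k))
      = fun ω : Fin m → ℝ => ∏ k, Real.exp (c k * ω k) := by
    ext ω; rw [← Real.exp_sum]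
  rw [this, volume_pi, integral_fintype_prod_eq_prod (f := fun k x => Real.exp (c k * x))]
  simp_rw [volume_real_eq, integral_exp_mul_gaussian, ← Real.exp_sum, Finset.sum_div]

lemma lintegral_exp_sum_mul {m : ℕ} (c : Fin m → ℝ) :
    ∫⁻ ω, ENNReal.ofReal (Real.exp (∑ k, c k * ω k))
        ∂(Measure.pi fun _ : Fin m => gaussianReal 0 1)
      = ENNReal.ofReal (Real.exp ((∑ k, (c k)^2) / 2)) := by
  rw [← ofReal_integral_eq_lintegral_ofReal (integrable_exp_sum_mul c)
    (Filter.Eventually.of_forall fun ω => (Real.exp_pos _).le), integral_exp_sum_mul]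

end PiGaussian

lemma measurable_lincomb {m : ℕ} (c : Fin m → ℝ) :
    Measurable (fun ω : Fin m → ℝ => ∑ k, c k * ω k) :=
  Finset.measurable_sum _ fun k _ => (measurable_pi_apply k : Measurable fun ω : Fin m → ℝ => ω k).const_mul (c k)

lemma gaussian_chernoff {m : ℕ} (c : Fin m → ℝ) {s l : ℝ} (hl : 0 ≤ l) :
    (Measure.pi fun _ : Fin m => gaussianReal 0 1) {ω | s ≤ ∑ k, c k * ω k}
      ≤ ENNReal.ofReal (Real.exp (-(l*s) + l^2 * (∑ k, (c k)^2)/2)) := by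
  set μ := (Measure.pi fun _ : Fin m => gaussianReal 0 1)
  set X := fun ω : Fin m → ℝ => ∑ k, c k * ω k with hXdef
  have hX : Measurable X := measurable_lincomb c
  have hA : MeasurableSet {ω | s ≤ X ω} := measurableSet_le measurable_const hX
  have key : ∀ ω, ({ω | s ≤ X ω}).indicator (fun _ => (1:ℝ≥0∞)) ω
      ≤ ENNReal.ofReal (Real.exp (-(l*s) + ∑ k, (l * c k) * ω k)) := by
    intro ω
    by_cases h : ω ∈ {ω | s ≤ X ω}
    · rw [Set.indicator_of_mem h]
      refine ENNReal.one_le_ofReal.mpr (Real.one_le_exp ?_)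
      have : ∑ k, (l * c k) * ω k = l * X ω := by
        rw [hXdef, Finset.mul_sum]; exact Finset.sum_congr rfl fun k _ => by ring
      rw [this]
      have := h
      simp only [Set.mem_setOf_eq] at this
      nlinarith [mul_le_mul_of_nonneg_left this hl]
    · rw [Set.indicator_of_notMem h]; exact zero_le
  calc μ {ω | s ≤ X ω} = ∫⁻ ω, ({ω | s ≤ X ω}).indicator (fun _ => (1:ℝ≥0∞)) ω ∂μ :=
        (lintegral_indicator_one hA).symm
    _ ≤ ∫⁻ ω, ENNReal.ofReal (Real.exp (-(l*s) + ∑ k, (l * c k) * ω k)) ∂μ :=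
        lintegral_mono key
    _ = ENNReal.ofReal (Real.exp (-(l*s)))
        * ∫⁻ ω, ENNReal.ofReal (Real.exp (∑ k, (l * c k) * ω k)) ∂μ := by
        simp_rw [Real.exp_add, ENNReal.ofReal_mul (Real.exp_pos _).le]
        rw [lintegral_const_mul' _ _ ENNReal.ofReal_ne_top]
    _ = ENNReal.ofReal (Real.exp (-(l*s) + l^2 * (∑ k, (c k)^2)/2)) := by
        rw [lintegral_exp_sum_mul, ← ENNReal.ofReal_mul (Real.exp_pos _).le, ← Real.exp_add]
        have h2 : ∑ k, (l * c k)^2 = l^2 * ∑ k, (c k)^2 := by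
          rw [Finset.mul_sum]; exact Finset.sum_congr rfl fun k _ => by ring
        rw [h2]


lemma gaussian_lower {m : ℕ} (c : Fin m → ℝ) (hc : ∑ k, (c k)^2 = 1) {t : ℝ}
    (ht : 0 ≤ t) (h4 : 1 ≤ 4*t^2) :
    ENNReal.ofReal (Real.exp (-(16*t^2))/3)
      ≤ (Measure.pi fun _ : Fin m => gaussianReal 0 1) {ω | t ≤ ∑ k, c k * ω k} := by
  set μ := (Measure.pi fun _ : Fin m => gaussianReal 0 1) with hμ
  haveI : IsProbabilityMeasure μ := by rw [hμ]; infer_instance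
  set X := fun ω : Fin m → ℝ => ∑ k, c k * ω k with hXdef
  have hX : Measurable X := measurable_lincomb c
  set A := {ω : Fin m → ℝ | t ≤ X ω} with hAdef
  have hA : MeasurableSet A := measurableSet_le measurable_const hX
  set l := 4*t with hl
  have hl0 : 0 ≤ l := by positivity
  -- the exponential moment function
  set f := fun ω : Fin m → ℝ => ENNReal.ofReal (Real.exp (∑ k, (l * c k) * ω k)) with hfdef
  have hfX : ∀ ω, f ω = ENNReal.ofReal (Real.exp (l * X ω)) := by
    intro ω
    rw [hfdef, hXdef]
    simp only []
    congr 2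
    rw [Finset.mul_sum]
    exact Finset.sum_congr rfl fun k _ => by ring
  have hfmeas : Measurable f :=
    (measurable_lincomb (fun k => l * c k)).exp.ennreal_ofReal
  have Etot : ∫⁻ ω, f ω ∂μ = ENNReal.ofReal (Real.exp (8*t^2)) := by
    rw [hfdef, hμ, lintegral_exp_sum_mul]
    congr 2
    have h2 : ∑ k, (l * c k)^2 = l^2 * ∑ k, (c k)^2 := by
      rw [Finset.mul_sum]; exact Finset.sum_congr rfl fun k _ => by ring
    rw [h2, hc, hl]; ring
  -- complement part
  have Ecompl : ∫⁻ ω in Aᶜ, f ω ∂μ ≤ ENNReal.ofReal (Real.exp (4*t^2)) := by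
    have : ∫⁻ ω in Aᶜ, f ω ∂μ ≤ ∫⁻ _ in Aᶜ, ENNReal.ofReal (Real.exp (4*t^2)) ∂μ := by
      refine setLIntegral_mono measurable_const ?_
      intro x hx
      rw [hfX]
      refine ENNReal.ofReal_le_ofReal (Real.exp_le_exp.mpr ?_)
      have hxA : ¬ (t ≤ X x) := hx
      push_neg at hxA
      have : l * X x ≤ l * t := mul_le_mul_of_nonneg_left hxA.le hl0
      calc l * X x ≤ l * t := this
        _ = 4*t^2 := by rw [hl]; ring
    refine this.trans ?_
    rw [setLIntegral_const]
    calc ENNReal.ofReal (Real.exp (4*t^2)) * μ Aᶜ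
        ≤ ENNReal.ofReal (Real.exp (4*t^2)) * 1 := by
          exact mul_le_mul_right prob_le_one _
      _ = _ := mul_one _
  -- Cauchy-Schwarz part
  have ECS : ∫⁻ ω in A, f ω ∂μ
      ≤ ENNReal.ofReal (Real.exp (16*t^2)) * (μ A) ^ (1/2 : ℝ) := by
    set g := A.indicator (fun _ => (1:ℝ≥0∞)) with hgdef
    have hgmeas : Measurable g := measurable_const.indicator hA
    have hrw : ∫⁻ ω in A, f ω ∂μ = ∫⁻ ω, (f * g) ω ∂μ := by
      rw [← lintegral_indicator hA]
      congr 1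
      ext ω
      by_cases h : ω ∈ A
      · simp [hgdef, Set.indicator_of_mem h]
      · simp [hgdef, Set.indicator_of_notMem h]
    rw [hrw]
    have hconj : Real.HolderConjugate 2 2 := Real.HolderConjugate.two_two
    refine (ENNReal.lintegral_mul_le_Lp_mul_Lq μ hconj hfmeas.aemeasurable
      hgmeas.aemeasurable).trans ?_
    have h1 : ∫⁻ ω, f ω ^ (2:ℝ) ∂μ = ENNReal.ofReal (Real.exp (32*t^2)) := by
      have hpt : ∀ ω, f ω ^ (2:ℝ)
          = ENNReal.ofReal (Real.exp (∑ k, ((2*l) * c k) * ω k)) := by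
        intro ω
        rw [hfX, ENNReal.ofReal_rpow_of_pos (Real.exp_pos _), ← Real.exp_mul]
        congr 2
        have : ∑ k, ((2*l) * c k) * ω k = (2*l) * X ω := by
          rw [hXdef]
          simp only []
          rw [Finset.mul_sum]
          exact Finset.sum_congr rfl fun k _ => by ring
        rw [this]; ring
      simp_rw [hpt]
      rw [hμ, lintegral_exp_sum_mul]
      congr 2
      have h2 : ∑ k, ((2*l) * c k)^2 = (2*l)^2 * ∑ k, (c k)^2 := by
        rw [Finset.mul_sum]; exact Finset.sum_congr rfl fun k _ => by ring
      rw [h2, hc, hl]; ring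
    have h2 : ∫⁻ ω, g ω ^ (2:ℝ) ∂μ = μ A := by
      have hpt : ∀ ω, g ω ^ (2:ℝ) = g ω := by
        intro ω
        rw [hgdef]
        by_cases h : ω ∈ A
        · simp [Set.indicator_of_mem h]
        · simp [Set.indicator_of_notMem h, ENNReal.zero_rpow_of_pos two_pos]
      simp_rw [hpt]
      exact lintegral_indicator_one hA
    rw [h1, h2]
    refine mul_le_mul' ?_ le_rfl
    rw [ENNReal.ofReal_rpow_of_pos (Real.exp_pos _), ← Real.exp_mul]
    exact ENNReal.ofReal_le_ofReal (Real.exp_le_exp.mpr (le_of_eq (by ring)))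
  -- combine
  have total : ENNReal.ofReal (Real.exp (8*t^2))
      ≤ ENNReal.ofReal (Real.exp (16*t^2)) * (μ A) ^ (1/2 : ℝ)
        + ENNReal.ofReal (Real.exp (4*t^2)) := by
    rw [← Etot, ← lintegral_add_compl f hA]
    exact add_le_add ECS Ecompl
  have hsub : ENNReal.ofReal (Real.exp (8*t^2) - Real.exp (4*t^2))
      ≤ ENNReal.ofReal (Real.exp (16*t^2)) * (μ A) ^ (1/2 : ℝ) := by
    rw [ENNReal.ofReal_sub _ (Real.exp_pos _).le]
    exact tsub_le_iff_right.mpr total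
  set D := Real.exp (8*t^2) - Real.exp (4*t^2) with hD
  set E := Real.exp (16*t^2) with hE
  have hE0 : 0 < E := Real.exp_pos _
  have hD0 : 0 ≤ D := by
    rw [hD]
    have : Real.exp (4*t^2) ≤ Real.exp (8*t^2) := Real.exp_le_exp.mpr (by nlinarith)
    linarith
  have hdiv : ENNReal.ofReal (D / E) ≤ (μ A) ^ (1/2 : ℝ) := by
    rw [ENNReal.ofReal_div_of_pos hE0]
    rw [ENNReal.div_le_iff_le_mul (Or.inl ((ENNReal.ofReal_pos.mpr hE0).ne'))
      (Or.inl ENNReal.ofReal_ne_top)]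
    rw [mul_comm]
    exact hsub
  have hsq : ENNReal.ofReal ((D / E)^2) ≤ μ A := by
    have h := ENNReal.rpow_le_rpow hdiv (by norm_num : (0:ℝ) ≤ 2)
    rw [← ENNReal.rpow_mul] at h
    norm_num at h
    rw [ENNReal.ofReal_pow (div_nonneg hD0 hE0.le)]
    exact h
  refine le_trans (ENNReal.ofReal_le_ofReal ?_) hsq
  -- the real-number inequality
  set a := Real.exp (4*t^2) with ha
  have hae : Real.exp 1 ≤ a := Real.exp_le_exp.mpr h4
  have he : (2.7182818283 : ℝ) < Real.exp 1 := Real.exp_one_gt_d9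
  have ha2 : Real.exp (8*t^2) = a^2 := by rw [ha, ← Real.exp_nat_mul]; ring_nf
  have ha4 : E = a^4 := by rw [hE, ha, ← Real.exp_nat_mul]; ring_nf
  have haneg : Real.exp (-(16*t^2)) = (a^4)⁻¹ := by
    rw [← ha4, hE, Real.exp_neg]
  rw [haneg, hD, ha2, ha4]
  have ha0 : 0 < a := Real.exp_pos _
  rw [div_pow, div_le_div_iff₀ (by norm_num) (by positivity)]
  have key : (a^4)⁻¹ * (a^4)^2 = a^4 := by field_simp
  rw [key]
  nlinarith [sq_nonneg a, sq_nonneg (a-1), sq_nonneg (a*(a-1))]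

set_option maxHeartbeats 1000000 in
theorem kms_rounding_large_independent_set :
    ∃ C : ℝ, 1 ≤ C ∧
      ∀ ε : ℝ, 0 < ε → ε ≤ 1/2 →
        ∀ (V : Type) [Fintype V] [DecidableEq V] (G : SimpleGraph V),
          2 ≤ Fintype.card V →
          ∀ (H : Type) [NormedAddCommGroup H] [InnerProductSpace ℝ H] (u : V → H),
            (∀ i : V, ‖u i‖ = 1) →
            (∀ i j : V, G.Adj i j → (inner ℝ (u i) (u j) : ℝ) ≤ -1 + ε) →
            ∃ I : Finset V, (∀ a ∈ I, ∀ b ∈ I, ¬ G.Adj a b) ∧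
              ((Fintype.card V : ℝ) ^ ((1 : ℝ) - C * ε)) / C ≤ (I.card : ℝ) := by
  refine ⟨1000, by norm_num, ?_⟩
  intro ε hε hε2 V _ _ G hcard H _ _ u hnorm hinner
  classical
  set n := Fintype.card V with hn
  by_cases htriv : ((n:ℝ)) ^ ((1:ℝ) - 1000*ε) ≤ 1000
  · obtain ⟨v⟩ : Nonempty V := Fintype.card_pos_iff.mp (by omega)
    refine ⟨{v}, ?_, ?_⟩
    · intro x hx y hy
      rw [Finset.mem_singleton] at hx hy
      subst hx; subst hy
      exact G.irrefl
    · rw [Finset.card_singleton, Nat.cast_one]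
      have : (n:ℝ) ^ ((1:ℝ) - 1000*ε) / 1000 ≤ 1000 / 1000 := by
        gcongr
      simpa using this
  · push_neg at htriv
    have hn2 : 2 ≤ n := hcard
    have hn1 : (1:ℝ) < n := by exact_mod_cast Nat.lt_of_lt_of_le one_lt_two hn2
    have hn0 : (0:ℝ) < n := lt_trans one_pos hn1
    have hexp_pos : 0 < 1 - 1000*ε := by
      by_contra h
      push_neg at h
      have : (n:ℝ) ^ ((1:ℝ) - 1000*ε) ≤ 1 :=
        Real.rpow_le_one_of_one_le_of_nonpos hn1.le (by linarith)
      linarith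
    have hεsmall : ε < 1/1000 := by linarith
    have hYn : (n:ℝ) ^ ((1:ℝ) - 1000*ε) ≤ n := by
      calc (n:ℝ) ^ ((1:ℝ) - 1000*ε) ≤ (n:ℝ) ^ (1:ℝ) :=
            Real.rpow_le_rpow_of_exponent_le hn1.le (by linarith)
        _ = n := Real.rpow_one _
    have hn1000 : (1000:ℝ) < n := lt_of_lt_of_le htriv hYn
    -- vector setup
    set W := Submodule.span ℝ (Set.range u) with hW
    haveI : FiniteDimensional ℝ W := FiniteDimensional.span_of_finite ℝ (Set.finite_range u)
    set m := Module.finrank ℝ W with hm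
    set b := stdOrthonormalBasis ℝ W with hb
    set uW : V → W := fun i => ⟨u i, Submodule.subset_span (Set.mem_range_self i)⟩ with huW
    set a : V → Fin m → ℝ := fun i k => (inner ℝ (uW i) (b k) : ℝ) with ha
    have key : ∀ i j, ∑ k, a i k * a j k = (inner ℝ (u i) (u j) : ℝ) := by
      intro i j
      have h := b.sum_inner_mul_inner (uW i) (uW j)
      calc ∑ k, a i k * a j k = ∑ k, (inner ℝ (uW i) (b k) : ℝ) * (inner ℝ (b k) (uW j) : ℝ) := by
            refine Finset.sum_congr rfl fun k _ => ?_
            have hcomm : (inner ℝ (uW j) (b k) : ℝ) = inner ℝ (b k) (uW j) := real_inner_comm _ _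
            simp only [ha]
            rw [hcomm]
        _ = (inner ℝ (uW i) (uW j) : ℝ) := h
        _ = (inner ℝ (u i) (u j) : ℝ) := rfl
    have norm1 : ∀ i, ∑ k, (a i k)^2 = 1 := by
      intro i
      have : ∑ k, a i k * a i k = (inner ℝ (u i) (u i) : ℝ) := key i i
      calc ∑ k, (a i k)^2 = ∑ k, a i k * a i k := by
            exact Finset.sum_congr rfl fun k _ => sq (a i k) ▸ by ring
        _ = (inner ℝ (u i) (u i) : ℝ) := this
        _ = ‖u i‖^2 := real_inner_self_eq_norm_sq (u i)
        _ = 1 := by rw [hnorm i]; norm_num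
    -- probability setup
    set μ := (Measure.pi fun _ : Fin m => gaussianReal 0 1) with hμ
    haveI : IsProbabilityMeasure μ := by rw [hμ]; infer_instance
    have hlogn : 0 < Real.log n := Real.log_pos hn1
    set t := Real.sqrt (4*ε*Real.log n + 1/4) with htdef
    have ht0 : 0 ≤ t := Real.sqrt_nonneg _
    have ht2 : t^2 = 4*ε*Real.log n + 1/4 := Real.sq_sqrt (by positivity)
    have h4t : 1 ≤ 4*t^2 := by rw [ht2]; nlinarith
    set A : V → Set (Fin m → ℝ) := fun i => {ω | t ≤ ∑ k, a i k * ω k} with hA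
    have hAmeas : ∀ i, MeasurableSet (A i) := fun i =>
      measurableSet_le measurable_const (measurable_lincomb (a i))
    -- lower bound on each A i
    have hlow : ∀ i, ENNReal.ofReal (Real.exp (-(16*t^2))/3) ≤ μ (A i) := fun i =>
      gaussian_lower (a i) (norm1 i) ht0 h4t
    -- upper bound on pairs
    have hpair : ∀ i j, G.Adj i j →
        μ (A i ∩ A j) ≤ ENNReal.ofReal (Real.exp (-(t^2/ε))) := by
      intro i j hij
      have hv : ∑ k, (a i k + a j k)^2 = 2 + 2 * (inner ℝ (u i) (u j) : ℝ) := by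
        have expand : ∑ k, (a i k + a j k)^2
            = ∑ k, (a i k)^2 + 2 * (∑ k, a i k * a j k) + ∑ k, (a j k)^2 := by
          rw [Finset.mul_sum, ← Finset.sum_add_distrib, ← Finset.sum_add_distrib]
          exact Finset.sum_congr rfl fun k _ => by ring
        rw [expand, norm1 i, norm1 j, key i j]
        ring
      have hvle : ∑ k, (a i k + a j k)^2 ≤ 2*ε := by
        rw [hv]
        have := hinner i j hij
        linarith
      have hsub : A i ∩ A j ⊆ {ω | 2*t ≤ ∑ k, (a i k + a j k) * ω k} := by
        intro ω hω
        obtain ⟨h1, h2⟩ := hω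
        have h1' : t ≤ ∑ k, a i k * ω k := h1
        have h2' : t ≤ ∑ k, a j k * ω k := h2
        have : ∑ k, (a i k + a j k) * ω k
            = (∑ k, a i k * ω k) + ∑ k, a j k * ω k := by
          rw [← Finset.sum_add_distrib]
          exact Finset.sum_congr rfl fun k _ => by ring
        show 2*t ≤ ∑ k, (a i k + a j k) * ω k
        rw [this]
        linarith
      calc μ (A i ∩ A j) ≤ μ {ω | 2*t ≤ ∑ k, (a i k + a j k) * ω k} := measure_mono hsub
        _ ≤ ENNReal.ofReal (Real.exp (-((t/ε)*(2*t)) + (t/ε)^2 * (∑ k, (a i k + a j k)^2)/2)) :=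
            gaussian_chernoff _ (by positivity)
        _ ≤ ENNReal.ofReal (Real.exp (-(t^2/ε))) := by
            refine ENNReal.ofReal_le_ofReal (Real.exp_le_exp.mpr ?_)
            have h1 : (t/ε)^2 * (∑ k, (a i k + a j k)^2) ≤ (t/ε)^2 * (2*ε) :=
              mul_le_mul_of_nonneg_left hvle (sq_nonneg _)
            have h2 : (t/ε)^2 * (2*ε) = 2*(t^2/ε) := by field_simp
            have h3 : (t/ε) * (2*t) = 2*(t^2/ε) := by field_simp
            linarith
    -- real-valued probabilities
    set qr : ℝ := Real.exp (-(16*t^2))/3 with hqr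
    set pr : ℝ := Real.exp (-(t^2/ε)) with hpr
    have hq : ∀ i, qr ≤ (μ (A i)).toReal := by
      intro i
      exact (ENNReal.ofReal_le_iff_le_toReal (measure_ne_top μ _)).mp (hlow i)
    have hp : ∀ i j, G.Adj i j → (μ (A i ∩ A j)).toReal ≤ pr := by
      intro i j hij
      exact ENNReal.toReal_le_of_le_ofReal (Real.exp_pos _).le (hpair i j hij)
    -- the first-moment function
    set Eset : Finset (V × V) := Finset.univ.filter (fun p => G.Adj p.1 p.2) with hEset
    set f : (Fin m → ℝ) → ℝ := fun ω =>
      (∑ i : V, Set.indicator (A i) (fun _ => (1:ℝ)) ω)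
        - ∑ p ∈ Eset, Set.indicator (A p.1 ∩ A p.2) (fun _ => (1:ℝ)) ω with hf
    have int1 : Integrable (fun ω => ∑ i : V, Set.indicator (A i) (fun _ => (1:ℝ)) ω) μ :=
      integrable_finset_sum _ fun i _ => (integrable_const (1:ℝ)).indicator (hAmeas i)
    have int2 : Integrable (fun ω =>
        ∑ p ∈ Eset, Set.indicator (A p.1 ∩ A p.2) (fun _ => (1:ℝ)) ω) μ :=
      integrable_finset_sum _ fun p _ =>
        (integrable_const (1:ℝ)).indicator ((hAmeas p.1).inter (hAmeas p.2))
    have hfint : Integrable f μ := int1.sub int2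
    have hEcard : (Eset.card : ℝ) ≤ (n:ℝ)^2 := by
      have h1 : Eset.card ≤ (Finset.univ : Finset (V × V)).card :=
        Finset.card_le_card (Finset.filter_subset _ _)
      have h2 : (Finset.univ : Finset (V × V)).card = n * n := by
        rw [Finset.card_univ, Fintype.card_prod, hn]
      have : (Eset.card : ℝ) ≤ (n:ℝ) * n := by
        rw [← Nat.cast_mul, ← h2]
        exact_mod_cast h1
      nlinarith
    have hintf : (n:ℝ) * qr - (n:ℝ)^2 * pr ≤ ∫ ω, f ω ∂μ := by
      rw [hf, integral_sub int1 int2, integral_finset_sum _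
        (fun i _ => (integrable_const (1:ℝ)).indicator (hAmeas i)),
        integral_finset_sum _ (fun p _ =>
          (integrable_const (1:ℝ)).indicator ((hAmeas p.1).inter (hAmeas p.2)))]
      have e1 : ∀ i : V, ∫ ω, Set.indicator (A i) (fun _ => (1:ℝ)) ω ∂μ = (μ (A i)).toReal := by
        intro i
        rw [integral_indicator_const (1:ℝ) (hAmeas i), smul_eq_mul, mul_one]; rfl
      have e2 : ∀ p : V × V, ∫ ω, Set.indicator (A p.1 ∩ A p.2) (fun _ => (1:ℝ)) ω ∂μ
          = (μ (A p.1 ∩ A p.2)).toReal := by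
        intro p
        rw [integral_indicator_const (1:ℝ) ((hAmeas p.1).inter (hAmeas p.2)), smul_eq_mul, mul_one]; rfl
      simp_rw [e1, e2]
      have hsum1 : (n:ℝ) * qr ≤ ∑ i : V, (μ (A i)).toReal := by
        calc (n:ℝ) * qr = ∑ _i : V, qr := by
              rw [Finset.sum_const, Finset.card_univ, ← hn, nsmul_eq_mul]
          _ ≤ ∑ i : V, (μ (A i)).toReal := Finset.sum_le_sum fun i _ => hq i
      have hsum2 : ∑ p ∈ Eset, (μ (A p.1 ∩ A p.2)).toReal ≤ (n:ℝ)^2 * pr := by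
        calc ∑ p ∈ Eset, (μ (A p.1 ∩ A p.2)).toReal ≤ ∑ p ∈ Eset, pr := by
              refine Finset.sum_le_sum fun p hp' => ?_
              have hadj : G.Adj p.1 p.2 := (Finset.mem_filter.mp hp').2
              exact hp p.1 p.2 hadj
          _ = Eset.card * pr := by rw [Finset.sum_const, nsmul_eq_mul]
          _ ≤ (n:ℝ)^2 * pr := by
              refine mul_le_mul_of_nonneg_right hEcard (Real.exp_pos _).le
      linarith
    -- numeric estimates
    have hqr_eq : qr = (n:ℝ)^(-(64*ε)) * Real.exp (-4) / 3 := by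
      rw [hqr, ht2, Real.rpow_def_of_pos hn0, ← Real.exp_add]
      ring_nf
    have hpr_le : pr ≤ (n:ℝ)^(-(4:ℝ)) := by
      rw [hpr, Real.rpow_def_of_pos hn0]
      refine Real.exp_le_exp.mpr ?_
      rw [ht2]
      have heq : (4*ε*Real.log n + 1/4)/ε = 4*Real.log n + 1/(4*ε) := by
        field_simp
      rw [heq]
      have h5 : 0 < 1/(4*ε) := by positivity
      linarith
    have hnum : (n:ℝ)^((1:ℝ)-1000*ε)/1000 ≤ (n:ℝ) * qr - (n:ℝ)^2 * pr := by
      have hY : (1000:ℝ) < (n:ℝ)^((1:ℝ)-1000*ε) := htriv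
      have h64 : (n:ℝ)^((1:ℝ)-1000*ε) ≤ (n:ℝ)^((1:ℝ)-64*ε) :=
        Real.rpow_le_rpow_of_exponent_le hn1.le (by linarith)
      have hmul1 : (n:ℝ) * ((n:ℝ)^(-(64*ε))) = (n:ℝ)^((1:ℝ)-64*ε) := by
        rw [show ((1:ℝ)-64*ε) = 1 + (-(64*ε)) by ring, Real.rpow_add hn0, Real.rpow_one]
      have hmul2 : (n:ℝ)^(2:ℕ) * ((n:ℝ)^(-(4:ℝ))) = (n:ℝ)^(-(2:ℝ)) := by
        rw [show ((n:ℝ)^(2:ℕ) : ℝ) = (n:ℝ)^(2:ℝ) by rw [Real.rpow_two], ← Real.rpow_add hn0]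
        norm_num
      have hsmall : (n:ℝ)^(-(2:ℝ)) ≤ 1 :=
        Real.rpow_le_one_of_one_le_of_nonpos hn1.le (by norm_num)
      have hexp4 : Real.exp (-4) ≥ 1/55 := by
        have h1 : Real.exp 1 < 2.7182818286 := Real.exp_one_lt_d9
        have h2 : Real.exp (4:ℝ) = (Real.exp 1)^(4:ℕ) := by
          rw [← Real.exp_nat_mul]
          norm_num
        have h3 : Real.exp (4:ℝ) ≤ 55 := by
          rw [h2]
          have e1 : (0:ℝ) < Real.exp 1 := Real.exp_pos 1
          have hb : Real.exp 1 ≤ 2.72 := by linarith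
          calc (Real.exp 1)^(4:ℕ) ≤ (2.72:ℝ)^(4:ℕ) := by
                exact pow_le_pow_left₀ e1.le hb 4
            _ ≤ 55 := by norm_num
        have h4 : 0 < Real.exp (4:ℝ) := Real.exp_pos _
        rw [Real.exp_neg, ge_iff_le, ← one_div]
        exact one_div_le_one_div_of_le h4 h3
      have hqpos : 0 ≤ (n:ℝ)^(-(64*ε)) := (Real.rpow_pos_of_pos hn0 _).le
      have hterm1 : (n:ℝ)^((1:ℝ)-64*ε) * (1/165) ≤ (n:ℝ) * qr := by
        rw [hqr_eq, ← hmul1]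
        have : (n:ℝ) * ((n:ℝ)^(-(64*ε))) * (1/165) ≤ (n:ℝ) * ((n:ℝ)^(-(64*ε))) * (Real.exp (-4)/3) := by
          refine mul_le_mul_of_nonneg_left (by linarith) (by positivity)
        calc (n:ℝ) * ((n:ℝ)^(-(64*ε))) * (1/165)
            ≤ (n:ℝ) * ((n:ℝ)^(-(64*ε))) * (Real.exp (-4)/3) := this
          _ = (n:ℝ) * ((n:ℝ)^(-(64*ε)) * Real.exp (-4) / 3) := by ring
      have hterm2 : (n:ℝ)^2 * pr ≤ 1 := by
        have : (n:ℝ)^2 * pr ≤ (n:ℝ)^(2:ℕ) * ((n:ℝ)^(-(4:ℝ))) := by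
          norm_num
          exact mul_le_mul_of_nonneg_left (hpr_le.trans_eq (by rw [Real.rpow_neg hn0.le]; norm_num)) (by positivity)
        rw [hmul2] at this
        linarith
      have hchain : (n:ℝ)^((1:ℝ)-1000*ε) * (1/165) ≤ (n:ℝ) * qr := by
        refine le_trans ?_ hterm1
        exact mul_le_mul_of_nonneg_right h64 (by norm_num)
      linarith [hY, hchain, hterm2]
    -- extract a good sample point
    obtain ⟨ω₀, hω₀⟩ := exists_integral_le hfint
    set S : Finset V := Finset.univ.filter (fun i => ω₀ ∈ A i) with hS
    set Bad : Finset (V × V) := Eset.filter (fun p => ω₀ ∈ A p.1 ∩ A p.2) with hBad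
    have hfw : f ω₀ = (S.card : ℝ) - (Bad.card : ℝ) := by
      rw [hf]
      simp only [Set.indicator_apply]
      rw [Finset.sum_boole, Finset.sum_boole]
    set I := S.filter (fun i => ∀ j ∈ S, ¬ G.Adj i j) with hI
    have hIS : I ⊆ S := Finset.filter_subset _ _
    have hindep : ∀ x ∈ I, ∀ y ∈ I, ¬ G.Adj x y := by
      intro x hx y hy
      exact (Finset.mem_filter.mp hx).2 y (hIS hy)
    have hcardle : S.card ≤ I.card + Bad.card := by
      have hsub : S ⊆ I ∪ Bad.image Prod.fst := by
        intro i hi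
        by_cases h : ∀ j ∈ S, ¬ G.Adj i j
        · exact Finset.mem_union_left _ (Finset.mem_filter.mpr ⟨hi, h⟩)
        · push_neg at h
          obtain ⟨j, hj, hadj⟩ := h
          refine Finset.mem_union_right _ ?_
          refine Finset.mem_image.mpr ⟨(i, j), ?_, rfl⟩
          refine Finset.mem_filter.mpr ⟨?_, ?_⟩
          · exact Finset.mem_filter.mpr ⟨Finset.mem_univ _, hadj⟩
          · exact ⟨(Finset.mem_filter.mp hi).2, (Finset.mem_filter.mp hj).2⟩
      calc S.card ≤ (I ∪ Bad.image Prod.fst).card := Finset.card_le_card hsub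
        _ ≤ I.card + (Bad.image Prod.fst).card := Finset.card_union_le _ _
        _ ≤ I.card + Bad.card := add_le_add_right (Finset.card_image_le) _
    refine ⟨I, hindep, ?_⟩
    have hcast : (S.card : ℝ) - (Bad.card : ℝ) ≤ (I.card : ℝ) := by
      have : (S.card : ℝ) ≤ (I.card : ℝ) + (Bad.card : ℝ) := by exact_mod_cast hcardle
      linarith
    calc (n:ℝ)^((1:ℝ) - 1000*ε)/1000 ≤ (n:ℝ) * qr - (n:ℝ)^2 * pr := hnum
      _ ≤ ∫ ω, f ω ∂μ := hintf
      _ ≤ f ω₀ := hω₀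
      _ = (S.card : ℝ) - (Bad.card : ℝ) := hfw
      _ ≤ (I.card : ℝ) := hcast
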